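/- Let a < b be real numbers and let f : ℝ → ℝ² be a function that is differentiable at every point of [a, b] with derivative f′, and suppose x ↦ ‖f′(x)‖² is integrable on [a, b]. Let f̄ = (b − a)⁻¹ ∫_a^b f(x) dx denote the mean value of f on [a, b]. Then ∫_a^b ‖f(x) − f̄‖² dx ≤ (b − a)² ∫_a^b ‖f′(x)‖² dx. -/

import Mathlib

open MeasureTheory

/-- One-dimensional Poincaré–Wirtinger inequality with explicit constant
`(b - a)` for an ℝ²-valued function differentiable on `[a, b]`. -/
theorem poincare_wirtinger_interval
    (a b : ℝ) (hab : a < b)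
    (f f' : ℝ → EuclideanSpace ℝ (Fin 2))
    (hderiv : ∀ x ∈ Set.Icc a b, HasDerivAt f (f' x) x)
    (hint : IntegrableOn (fun x => ‖f' x‖ ^ 2) (Set.Icc a b)) :
    (∫ x in a..b, ‖f x - (b - a)⁻¹ • ∫ y in a..b, f y‖ ^ 2) ≤
      (b - a) ^ 2 * ∫ x in a..b, ‖f' x‖ ^ 2 := by
  have hab' : a ≤ b := hab.le
  have hba : (0:ℝ) < b - a := by linarith
  -- continuity of f on [a,b]
  have hcont : ContinuousOn f (Set.Icc a b) := fun x hx =>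
    (hderiv x hx).continuousAt.continuousWithinAt
  have hcontu : ContinuousOn f (Set.uIcc a b) := by
    rwa [Set.uIcc_of_le hab']
  have hfi : IntervalIntegrable f volume a b := hcontu.intervalIntegrable
  -- measurability and integrability of ‖f'‖ on [a,b]
  have hnm : AEStronglyMeasurable (fun x => ‖f' x‖) (volume.restrict (Set.Icc a b)) := by
    have h1 := hint.aestronglyMeasurable
    have h2 : (fun x => Real.sqrt (‖f' x‖ ^ 2)) = fun x => ‖f' x‖ := by
      funext x; rw [Real.sqrt_sq (norm_nonneg _)]
    have := Real.continuous_sqrt.comp_aestronglyMeasurable h1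
    simpa [Function.comp, h2] using this
  have hnint : IntegrableOn (fun x => ‖f' x‖) (Set.Icc a b) := by
    refine Integrable.mono' (g := fun x => 1 + ‖f' x‖ ^ 2)
      ((integrable_const 1).add hint) hnm ?_
    filter_upwards with x
    rw [Real.norm_of_nonneg (norm_nonneg _)]
    nlinarith [sq_nonneg (‖f' x‖ - 1), norm_nonneg (f' x)]
  -- integrability of f' on [a,b]
  have hf'meas : AEStronglyMeasurable f' (volume.restrict (Set.Icc a b)) := by
    have h0 : AEStronglyMeasurable f' (volume.restrict (Set.Ioo a b)) := by
      refine (stronglyMeasurable_deriv f).aestronglyMeasurable.restrict.congr ?_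
      filter_upwards [ae_restrict_mem measurableSet_Ioo] with x hx
      exact (hderiv x (Set.Ioo_subset_Icc_self hx)).deriv
    have heq : volume.restrict (Set.Icc a b) = volume.restrict (Set.Ioo a b) :=
      (Measure.restrict_congr_set Ioo_ae_eq_Icc).symm
    rw [heq]; exact h0
  have hf'int : IntegrableOn f' (Set.Icc a b) := by
    refine Integrable.mono' hnint hf'meas ?_
    filter_upwards with x using le_refl _
  -- FTC
  have key : ∀ x ∈ Set.Icc a b, ∀ y ∈ Set.Icc a b,
      (∫ t in y..x, f' t) = f x - f y := by
    intro x hx y hy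
    have hsub : Set.uIcc y x ⊆ Set.Icc a b := Set.uIcc_subset_Icc hy hx
    have hii : IntervalIntegrable f' volume y x := by
      rw [intervalIntegrable_iff]
      exact hf'int.mono_set ((Set.uIoc_subset_uIcc).trans hsub)
    exact intervalIntegral.integral_eq_sub_of_hasDerivAt
      (fun t ht => hderiv t (hsub ht)) hii
  set C : ℝ := ∫ t in a..b, ‖f' t‖ with hCdef
  have hC0 : 0 ≤ C :=
    intervalIntegral.integral_nonneg hab' (fun t _ => norm_nonneg _)
  have hCset : C = ∫ t in Set.Ioc a b, ‖f' t‖ :=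
    intervalIntegral.integral_of_le hab'
  have hnintIoc : IntegrableOn (fun x => ‖f' x‖) (Set.Ioc a b) :=
    hnint.mono_set Set.Ioc_subset_Icc_self
  -- pointwise bound ‖f x - f y‖ ≤ C
  have bound1 : ∀ x ∈ Set.Icc a b, ∀ y ∈ Set.Icc a b, ‖f x - f y‖ ≤ C := by
    intro x hx y hy
    rw [← key x hx y hy]
    calc ‖∫ t in y..x, f' t‖ ≤ ∫ t in Set.uIoc y x, ‖f' t‖ :=
          intervalIntegral.norm_integral_le_integral_norm_uIoc
      _ ≤ ∫ t in Set.Ioc a b, ‖f' t‖ := by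
          refine setIntegral_mono_set hnintIoc ?_ ?_
          · filter_upwards with t using norm_nonneg _
          · refine Filter.Eventually.of_forall ?_
            intro t ht
            rcases ht with ⟨h1, h2⟩
            constructor
            · exact lt_of_le_of_lt (le_min hy.1 hx.1) h1
            · exact le_trans h2 (max_le hy.2 hx.2)
      _ = C := hCset.symm
  -- bound for deviation from the mean
  have bound2 : ∀ x ∈ Set.Icc a b,
      ‖f x - (b - a)⁻¹ • ∫ y in a..b, f y‖ ≤ C := by
    intro x hx
    have h1 : (∫ y in a..b, (f x - f y)) = (b - a) • f x - ∫ y in a..b, f y := by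
      rw [intervalIntegral.integral_sub intervalIntegrable_const hfi,
        intervalIntegral.integral_const]
    have h2 : f x - (b - a)⁻¹ • ∫ y in a..b, f y
        = (b - a)⁻¹ • ∫ y in a..b, (f x - f y) := by
      rw [h1, smul_sub, smul_smul, inv_mul_cancel₀ hba.ne', one_smul]
    rw [h2, norm_smul, Real.norm_eq_abs, abs_of_pos (inv_pos.2 hba)]
    have h3 : ‖∫ y in a..b, (f x - f y)‖ ≤ ∫ y in a..b, ‖f x - f y‖ :=
      intervalIntegral.norm_integral_le_integral_norm hab'
    have h4 : (∫ y in a..b, ‖f x - f y‖) ≤ ∫ _ in a..b, C := by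
      refine intervalIntegral.integral_mono_on hab' ?_ intervalIntegrable_const ?_
      · have : ContinuousOn (fun y => ‖f x - f y‖) (Set.uIcc a b) :=
          ((continuousOn_const.sub hcontu).norm)
        exact this.intervalIntegrable
      · intro y hy; exact bound1 x hx y hy
    have h5 : (∫ _ in a..b, C) = (b - a) * C := by
      rw [intervalIntegral.integral_const, smul_eq_mul]
    calc (b - a)⁻¹ * ‖∫ y in a..b, (f x - f y)‖
        ≤ (b - a)⁻¹ * ((b - a) * C) := by
          apply mul_le_mul_of_nonneg_left _ (inv_nonneg.2 hba.le)
          calc ‖∫ y in a..b, (f x - f y)‖ ≤ ∫ y in a..b, ‖f x - f y‖ := h3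
            _ ≤ ∫ _ in a..b, C := h4
            _ = (b - a) * C := h5
      _ = C := by field_simp
  -- Cauchy–Schwarz: C ^ 2 ≤ (b - a) * ∫ ‖f'‖²
  set I2 : ℝ := ∫ t in a..b, ‖f' t‖ ^ 2 with hI2def
  have hI2set : I2 = ∫ t in Set.Ioc a b, ‖f' t‖ ^ 2 :=
    intervalIntegral.integral_of_le hab'
  have hintIoc : IntegrableOn (fun x => ‖f' x‖ ^ 2) (Set.Ioc a b) :=
    hint.mono_set Set.Ioc_subset_Icc_self
  have hcs : C ^ 2 ≤ (b - a) * I2 := by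
    set c : ℝ := C / (b - a) with hcdef
    have h0 : 0 ≤ ∫ x in Set.Ioc a b, (‖f' x‖ - c) ^ 2 :=
      setIntegral_nonneg measurableSet_Ioc (fun x _ => sq_nonneg _)
    have hconst : IntegrableOn (fun _ : ℝ => c ^ 2) (Set.Ioc a b) :=
      integrableOn_const measure_Ioc_lt_top.ne
    have hmul : IntegrableOn (fun x => 2 * c * ‖f' x‖) (Set.Ioc a b) :=
      hnintIoc.const_mul _
    have hexp : (fun x => (‖f' x‖ - c) ^ 2)
        = fun x => (‖f' x‖ ^ 2 - 2 * c * ‖f' x‖) + c ^ 2 := by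
      funext x; ring
    have hvol : (volume (Set.Ioc a b)).toReal = b - a := by
      rw [Real.volume_Ioc, ENNReal.toReal_ofReal hba.le]
    have hsubint : IntegrableOn (fun x => ‖f' x‖ ^ 2 - 2 * c * ‖f' x‖)
        (Set.Ioc a b) := hintIoc.sub hmul
    have hcomp : (∫ x in Set.Ioc a b, (‖f' x‖ - c) ^ 2)
        = I2 - 2 * c * C + c ^ 2 * (b - a) := by
      rw [hexp, integral_add hsubint hconst,
        integral_sub hintIoc hmul, integral_const_mul, setIntegral_const,
        smul_eq_mul, measureReal_def, hvol, hCset, hI2set]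
      ring
    rw [hcomp] at h0
    have hc : c * (b - a) = C := by
      rw [hcdef]; field_simp
    nlinarith [h0, hc, sq_nonneg c]
  -- conclude
  have hLHS : (∫ x in a..b, ‖f x - (b - a)⁻¹ • ∫ y in a..b, f y‖ ^ 2)
      ≤ (b - a) * C ^ 2 := by
    have hmono : (∫ x in a..b, ‖f x - (b - a)⁻¹ • ∫ y in a..b, f y‖ ^ 2)
        ≤ ∫ _ in a..b, C ^ 2 := by
      refine intervalIntegral.integral_mono_on hab' ?_ intervalIntegrable_const ?_
      · have : ContinuousOn (fun x => ‖f x - (b - a)⁻¹ • ∫ y in a..b, f y‖ ^ 2)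
            (Set.uIcc a b) := ((hcontu.sub continuousOn_const).norm).pow 2
        exact this.intervalIntegrable
      · intro x hx
        exact pow_le_pow_left₀ (norm_nonneg _) (bound2 x hx) 2
    calc (∫ x in a..b, ‖f x - (b - a)⁻¹ • ∫ y in a..b, f y‖ ^ 2)
        ≤ ∫ _ in a..b, C ^ 2 := hmono
      _ = (b - a) * C ^ 2 := by
          rw [intervalIntegral.integral_const, smul_eq_mul]
  calc (∫ x in a..b, ‖f x - (b - a)⁻¹ • ∫ y in a..b, f y‖ ^ 2)
      ≤ (b - a) * C ^ 2 := hLHS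
    _ ≤ (b - a) * ((b - a) * I2) := by
        exact mul_le_mul_of_nonneg_left hcs hba.le
    _ = (b - a) ^ 2 * I2 := by ring
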